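/- Let G and G' be simple digraphs on n vertices. If η_G = η_{G'} and η_{Gᶜ} = η_{G'ᶜ} as polynomials in (x,t↑,t↓,u↑,u↓), then η^c_G = η^c_{G'} as polynomials in (x,y,t↑,t↓,u↑,u↓). -/

import Mathlib

open Matrix

noncomputable section

namespace Stmt16

/-- The generalized characteristic polynomial
`η_G(x,t↑,t↓,u↑,u↓) = det(x·I + t↑·D^out + t↓·D^in + u↑·A + u↓·Aᵀ)`. -/
def eta {n : ℕ} (A : Matrix (Fin n) (Fin n) ℂ) (x t₁ t₂ u₁ u₂ : ℂ) : ℂ :=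
  (x • (1 : Matrix (Fin n) (Fin n) ℂ)
    + t₁ • (Matrix.diagonal fun i => ∑ j, A i j)
    + t₂ • (Matrix.diagonal fun i => ∑ j, A j i)
    + u₁ • A + u₂ • Aᵀ).det

/-- The completely generalized characteristic polynomial
`η^c_G(x,y,t↑,t↓,u↑,u↓) = det(x·I + y·J + t↑·D^out + t↓·D^in + u↑·A + u↓·Aᵀ)`. -/
def etaC {n : ℕ} (A : Matrix (Fin n) (Fin n) ℂ) (x y t₁ t₂ u₁ u₂ : ℂ) : ℂ :=
  (x • (1 : Matrix (Fin n) (Fin n) ℂ)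
    + y • (Matrix.of fun _ _ => (1 : ℂ))
    + t₁ • (Matrix.diagonal fun i => ∑ j, A i j)
    + t₂ • (Matrix.diagonal fun i => ∑ j, A j i)
    + u₁ • A + u₂ • Aᵀ).det

/-- The adjacency matrix of the complement digraph: `J − I − A`. -/
def complAdj {n : ℕ} (A : Matrix (Fin n) (Fin n) ℂ) : Matrix (Fin n) (Fin n) ℂ :=
  (Matrix.of fun _ _ => (1 : ℂ)) - 1 - A

end Stmt16

open Stmt16

namespace Stmt16Aux

/-- Determinant is affine under a rank-one all-ones perturbation. -/
lemma det_add_smul_allOnes {n : ℕ} (M : Matrix (Fin n) (Fin n) ℂ) (y : ℂ) :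
    (M + y • (Matrix.of fun _ _ => (1 : ℂ))).det
      = M.det + y * ∑ i, (M.updateRow i (fun _ => 1)).det := by
  classical
  set p : Fin n → Fin n → ℂ := fun _ _ => y with hp
  set q : Fin n → Fin n → ℂ := fun i j => M i j with hq
  have hadd : M + y • (Matrix.of fun _ _ => (1 : ℂ)) = Matrix.of (p + q) := by
    ext i j
    simp [p, q, Matrix.add_apply, Matrix.smul_apply, add_comm]
  have h1 : (M + y • (Matrix.of fun _ _ => (1 : ℂ))).det
      = Matrix.detRowAlternating (p + q) := by
    rw [hadd]; rfl
  have hmau := (Matrix.detRowAlternating (R := ℂ) (n := Fin n)).toMultilinearMap.map_add_univ p q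
  simp only [AlternatingMap.coe_multilinearMap] at hmau
  rw [h1, hmau]
  have hzero : ∀ s : Finset (Fin n), ¬ s.card ≤ 1 →
      Matrix.detRowAlternating (s.piecewise p q) = 0 := by
    intro s hs
    obtain ⟨a, ha, b, hb, hab⟩ := Finset.one_lt_card.mp (lt_of_not_ge hs)
    exact AlternatingMap.map_eq_zero_of_eq _ _
      (by simp [Finset.piecewise_eq_of_mem _ _ _ ha, Finset.piecewise_eq_of_mem _ _ _ hb, p]) hab
  have hsplit : (Finset.univ.filter fun s : Finset (Fin n) => s.card ≤ 1)
      = insert ∅ (Finset.univ.image fun i : Fin n => {i}) := by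
    ext s
    simp only [Finset.mem_filter, Finset.mem_univ, true_and, Finset.mem_insert,
      Finset.mem_image]
    constructor
    · intro h
      rcases Finset.eq_empty_or_nonempty s with rfl | ⟨x, hx⟩
      · exact Or.inl rfl
      · exact Or.inr ⟨x, (Finset.eq_singleton_iff_unique_mem.mpr
          ⟨hx, fun b hb => Finset.card_le_one.mp h b hb x hx⟩).symm⟩
    · intro h
      rcases h with rfl | ⟨x, rfl⟩
      · simp
      · simp
  have hempty : Matrix.detRowAlternating ((∅ : Finset (Fin n)).piecewise p q) = M.det := by
    rw [Finset.piecewise_empty]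
    rfl
  have hsing : ∀ i : Fin n, Matrix.detRowAlternating (({i} : Finset (Fin n)).piecewise p q)
      = y * (M.updateRow i (fun _ => 1)).det := by
    intro i
    have h2 : ({i} : Finset (Fin n)).piecewise p q
        = fun a b => (M.updateRow i (y • fun _ => (1:ℂ))) a b := by
      rw [Finset.piecewise_singleton]
      funext a b
      by_cases hai : a = i <;> simp [hai, p, q, Matrix.updateRow_apply, Function.update]
    show Matrix.detRowAlternating _ = _
    rw [h2]
    exact Matrix.det_updateRow_smul M i y (fun _ => 1)
  rw [← Finset.sum_filter_of_ne (fun s _ h => by_contra fun hs => h (hzero s hs)), hsplit,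
    Finset.sum_insert (by
      intro hmem
      simp only [Finset.mem_image, Finset.mem_univ, true_and] at hmem
      obtain ⟨x, hx⟩ := hmem
      exact Finset.singleton_ne_empty x hx),
    Finset.sum_image (fun a _ b _ h => by simpa using (Finset.singleton_injective h)),
    hempty, Finset.mul_sum]
  exact congrArg _ (Finset.sum_congr rfl fun i _ => hsing i)

/-- The pencil `x·I + t₁·D^out + t₂·D^in + u₁·A + u₂·Aᵀ`. -/
def base {n : ℕ} (A : Matrix (Fin n) (Fin n) ℂ) (x t₁ t₂ u₁ u₂ : ℂ) :
    Matrix (Fin n) (Fin n) ℂ :=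
  x • (1 : Matrix (Fin n) (Fin n) ℂ)
    + t₁ • (Matrix.diagonal fun i => ∑ j, A i j)
    + t₂ • (Matrix.diagonal fun i => ∑ j, A j i)
    + u₁ • A + u₂ • Aᵀ

lemma eta_eq_base {n : ℕ} (A : Matrix (Fin n) (Fin n) ℂ) (x t₁ t₂ u₁ u₂ : ℂ) :
    eta A x t₁ t₂ u₁ u₂ = (base A x t₁ t₂ u₁ u₂).det := rfl

lemma etaC_eq_base {n : ℕ} (A : Matrix (Fin n) (Fin n) ℂ) (x y t₁ t₂ u₁ u₂ : ℂ) :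
    etaC A x y t₁ t₂ u₁ u₂
      = (base A x t₁ t₂ u₁ u₂ + y • (Matrix.of fun _ _ => (1 : ℂ))).det := by
  unfold etaC base
  congr 1
  abel

/-- The "sum of cofactor-like terms" coefficient. -/
def coeffC {n : ℕ} (A : Matrix (Fin n) (Fin n) ℂ) (x t₁ t₂ u₁ u₂ : ℂ) : ℂ :=
  ∑ i, ((base A x t₁ t₂ u₁ u₂).updateRow i (fun _ => 1)).det

lemma etaC_affine {n : ℕ} (A : Matrix (Fin n) (Fin n) ℂ) (x y t₁ t₂ u₁ u₂ : ℂ) :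
    etaC A x y t₁ t₂ u₁ u₂ = eta A x t₁ t₂ u₁ u₂ + y * coeffC A x t₁ t₂ u₁ u₂ := by
  rw [etaC_eq_base, det_add_smul_allOnes, eta_eq_base, coeffC]

lemma base_compl {n : ℕ} (A : Matrix (Fin n) (Fin n) ℂ) (x t₁ t₂ u₁ u₂ : ℂ) :
    base (complAdj A) x t₁ t₂ u₁ u₂
      = base A (x + ((n : ℂ) - 1) * (t₁ + t₂) - u₁ - u₂) (-t₁) (-t₂) (-u₁) (-u₂)
        + (u₁ + u₂) • (Matrix.of fun _ _ => (1 : ℂ)) := by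
  have hrow : ∀ i, ∑ j, complAdj A i j = (n : ℂ) - 1 - ∑ j, A i j := by
    intro i
    simp [complAdj, Matrix.sub_apply, Matrix.one_apply, Finset.sum_sub_distrib,
      Finset.sum_ite_eq, Finset.card_univ]
  have hcol : ∀ i, ∑ j, complAdj A j i = (n : ℂ) - 1 - ∑ j, A j i := by
    intro i
    simp [complAdj, Matrix.sub_apply, Matrix.one_apply, Finset.sum_sub_distrib,
      Finset.sum_ite_eq, Finset.card_univ, eq_comm]
  have hdg1 : (Matrix.diagonal fun i => ∑ j, complAdj A i j)
      = Matrix.diagonal fun i => (n : ℂ) - 1 - ∑ j, A i j := by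
    rw [funext hrow]
  have hdg2 : (Matrix.diagonal fun i => ∑ j, complAdj A j i)
      = Matrix.diagonal fun i => (n : ℂ) - 1 - ∑ j, A j i := by
    rw [funext hcol]
  unfold base
  rw [hdg1, hdg2]
  ext i j
  rcases eq_or_ne i j with rfl | hij
  · simp only [complAdj, Matrix.add_apply, Matrix.smul_apply, Matrix.sub_apply,
      Matrix.one_apply_eq, Matrix.diagonal_apply_eq, Matrix.transpose_apply,
      Matrix.of_apply, smul_eq_mul]
    ring
  · simp only [complAdj, Matrix.add_apply, Matrix.smul_apply, Matrix.sub_apply,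
      Matrix.one_apply_ne hij, Matrix.one_apply_ne hij.symm,
      Matrix.diagonal_apply_ne _ hij, Matrix.transpose_apply,
      Matrix.of_apply, smul_eq_mul]
    ring

lemma eta_compl {n : ℕ} (A : Matrix (Fin n) (Fin n) ℂ) (x t₁ t₂ u₁ u₂ : ℂ) :
    eta (complAdj A) x t₁ t₂ u₁ u₂
      = etaC A (x + ((n : ℂ) - 1) * (t₁ + t₂) - u₁ - u₂) (u₁ + u₂) (-t₁) (-t₂) (-u₁) (-u₂) := by
  rw [eta_eq_base, base_compl, etaC_eq_base]

lemma coeffC_continuous {n : ℕ} (A : Matrix (Fin n) (Fin n) ℂ) (x t₁ t₂ u₂ : ℂ) :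
    Continuous fun s : ℂ => coeffC A x t₁ t₂ s u₂ := by
  apply continuous_finset_sum
  intro i _
  apply Continuous.matrix_det
  apply Continuous.matrix_updateRow _ _ continuous_const
  show Continuous fun s : ℂ =>
    (x • (1 : Matrix (Fin n) (Fin n) ℂ)
      + t₁ • (Matrix.diagonal fun i => ∑ j, A i j)
      + t₂ • (Matrix.diagonal fun i => ∑ j, A j i)) + s • A + u₂ • Aᵀ
  exact ((continuous_const.add (continuous_id.smul continuous_const)).add continuous_const)

end Stmt16Aux

open Stmt16Aux

/-- Zeta-equivalent simple digraphs with zeta-equivalent complements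
have the same completely generalized characteristic polynomial. -/
theorem stmt_16 {n : ℕ} (A A' : Matrix (Fin n) (Fin n) ℂ)
    (h01 : ∀ i j, A i j = 0 ∨ A i j = 1) (h01' : ∀ i j, A' i j = 0 ∨ A' i j = 1)
    (hdiag : ∀ i, A i i = 0) (hdiag' : ∀ i, A' i i = 0)
    (heta : ∀ x t₁ t₂ u₁ u₂ : ℂ, eta A x t₁ t₂ u₁ u₂ = eta A' x t₁ t₂ u₁ u₂)
    (hetac : ∀ x t₁ t₂ u₁ u₂ : ℂ,
      eta (complAdj A) x t₁ t₂ u₁ u₂ = eta (complAdj A') x t₁ t₂ u₁ u₂) :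
    ∀ x y t₁ t₂ u₁ u₂ : ℂ, etaC A x y t₁ t₂ u₁ u₂ = etaC A' x y t₁ t₂ u₁ u₂ := by
  -- Step 1: coefficients agree whenever u₁ + u₂ ≠ 0
  have hCne : ∀ X T₁ T₂ U₁ U₂ : ℂ, U₁ + U₂ ≠ 0 →
      coeffC A X T₁ T₂ U₁ U₂ = coeffC A' X T₁ T₂ U₁ U₂ := by
    intro X T₁ T₂ U₁ U₂ hne
    have h := hetac (X + ((n : ℂ) - 1) * (T₁ + T₂) - U₁ - U₂) (-T₁) (-T₂) (-U₁) (-U₂)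
    rw [eta_compl, eta_compl] at h
    have e1 : X + ((n : ℂ) - 1) * (T₁ + T₂) - U₁ - U₂
        + ((n : ℂ) - 1) * (-T₁ + -T₂) - -U₁ - -U₂ = X := by ring
    rw [e1, neg_neg, neg_neg, neg_neg, neg_neg] at h
    rw [etaC_affine, etaC_affine, heta] at h
    have h2 := add_left_cancel h
    have hne' : -U₁ + -U₂ ≠ 0 := by
      intro h0
      apply hne
      linear_combination -h0
    exact mul_left_cancel₀ hne' h2
  -- Step 2: coefficients agree everywhere, by continuity
  have hC : ∀ X T₁ T₂ U₁ U₂ : ℂ,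
      coeffC A X T₁ T₂ U₁ U₂ = coeffC A' X T₁ T₂ U₁ U₂ := by
    intro X T₁ T₂ U₁ U₂
    have hdense : Dense ({-U₂}ᶜ : Set ℂ) := dense_compl_singleton _
    have heqon : Set.EqOn (fun s : ℂ => coeffC A X T₁ T₂ s U₂)
        (fun s : ℂ => coeffC A' X T₁ T₂ s U₂) ({-U₂}ᶜ : Set ℂ) := by
      intro s hs
      refine hCne X T₁ T₂ s U₂ ?_
      intro h0
      exact hs (by simpa using eq_neg_of_add_eq_zero_left h0)
    have := Continuous.ext_on hdense (coeffC_continuous A X T₁ T₂ U₂)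
      (coeffC_continuous A' X T₁ T₂ U₂) heqon
    exact congrFun this U₁
  intro x y t₁ t₂ u₁ u₂
  rw [etaC_affine, etaC_affine, heta, hC]
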